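/- arXiv:1308.1700 — 2 statements merged into one kernel-verified Lean document; each statement's English description precedes it below -/
import Mathlib

section
/- For positive integers m, n, k with n ≥ 2 and k ≥ m, the number C_m(n,k) of k-colourings of the graph nK_m (disjoint union of n copies of the complete graph K_m) satisfies C_m(n,k) = Σ_{i=0}^{m} C(m,i) · (k−i)_{m−i} · C_m(n−1, k−i), where (x)_j denotes the falling factorial x(x−1)⋯(x−j+1) and C(m,i) is the binomial coefficient. -/
open Finset

/-- The disjoint union of `n` copies of the complete graph `K_m`, on vertex set `Fin n × Fin m`. -/
def cliqueUnion (n m : ℕ) : SimpleGraph (Fin n × Fin m) where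
  Adj x y := x.1 = y.1 ∧ x.2 ≠ y.2
  symm := ⟨fun _ _ h => ⟨h.1.symm, h.2.symm⟩⟩
  loopless := ⟨fun _ h => h.2 rfl⟩

/-- A finpartition of the vertex set is a colouring when every part is a stable set. -/
def IsColouring {V : Type*} [Fintype V] [DecidableEq V] (G : SimpleGraph V)
    (P : Finpartition (univ : Finset V)) : Prop :=
  ∀ p ∈ P.parts, ∀ x ∈ p, ∀ y ∈ p, ¬ G.Adj x y

/-- The number of `k`-colourings of `G` (partitions into exactly `k` nonempty stable sets). -/
noncomputable def numColourings {V : Type*} [Fintype V] [DecidableEq V] (G : SimpleGraph V) (k : ℕ) : ℕ :=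
  Nat.card {P : Finpartition (univ : Finset V) // P.parts.card = k ∧ IsColouring G P}

/-- The total number of colourings of `G`. -/
noncomputable def totalColourings {V : Type*} [Fintype V] [DecidableEq V] (G : SimpleGraph V) : ℕ :=
  Nat.card {P : Finpartition (univ : Finset V) // IsColouring G P}

namespace RecAux

lemma cU_adj {n m : ℕ} {x y : Fin n × Fin m} :
    (cliqueUnion n m).Adj x y ↔ x.1 = y.1 ∧ x.2 ≠ y.2 := Iff.rfl

/-- the colouring type -/
def CT (m N k : ℕ) : Type :=
  {P : Finpartition (univ : Finset (Fin N × Fin m)) // P.parts.card = k ∧ IsColouring (cliqueUnion N m) P}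

variable {m N : ℕ}

def e (w : Fin N × Fin m) : Fin (N + 1) × Fin m := (w.1.succ, w.2)

lemma e_injective : Function.Injective (e (m := m) (N := N)) := by
  intro a b h
  simp only [e, Prod.ext_iff] at h ⊢
  exact ⟨Fin.succ_injective _ h.1, h.2⟩

lemma e_fst_ne_zero (w : Fin N × Fin m) : (e w).1 ≠ 0 := Fin.succ_ne_zero _

lemma exists_e {v : Fin (N + 1) × Fin m} (h : v.1 ≠ 0) : ∃ w, e w = v :=
  ⟨(v.1.pred h, v.2), by simp [e]⟩

def r (p : Finset (Fin (N + 1) × Fin m)) : Finset (Fin N × Fin m) :=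
  univ.filter (fun w => e w ∈ p)

@[simp] lemma mem_r {p : Finset (Fin (N + 1) × Fin m)} {w : Fin N × Fin m} :
    w ∈ r p ↔ e w ∈ p := by simp [r]

lemma r_eq_empty_iff {p : Finset (Fin (N + 1) × Fin m)} :
    r p = ∅ ↔ ∀ v ∈ p, v.1 = 0 := by
  constructor
  · intro h v hv
    by_contra h0
    obtain ⟨w, rfl⟩ := exists_e h0
    have : w ∈ r p := mem_r.2 hv
    simp [h] at this
  · intro h
    rw [eq_empty_iff_forall_notMem]
    intro w hw
    exact e_fst_ne_zero w (h _ (mem_r.1 hw))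

/-- stability rephrased -/
lemma stable_eq {P : Finpartition (univ : Finset (Fin (N+1) × Fin m))}
    (hc : IsColouring (cliqueUnion (N+1) m) P) {p} (hp : p ∈ P.parts) {v w}
    (hv : v ∈ p) (hw : w ∈ p) (h1 : v.1 = w.1) : v = w := by
  by_contra hne
  exact hc p hp v hv w hw (cU_adj.2 ⟨h1, fun h2 => hne (Prod.ext h1 h2)⟩)

lemma stable_eq' {P : Finpartition (univ : Finset (Fin N × Fin m))}
    (hc : IsColouring (cliqueUnion N m) P) {p} (hp : p ∈ P.parts) {v w}
    (hv : v ∈ p) (hw : w ∈ p) (h1 : v.1 = w.1) : v = w := by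
  by_contra hne
  exact hc p hp v hv w hw (cU_adj.2 ⟨h1, fun h2 => hne (Prod.ext h1 h2)⟩)

end RecAux

namespace RecAux

variable {m N : ℕ}

/-- set of colours used only on clique 0 -/
def sOf (P : Finpartition (univ : Finset (Fin (N+1) × Fin m))) : Finset (Fin m) :=
  univ.filter (fun a : Fin m => ({((0 : Fin (N+1)), a)} : Finset (Fin (N+1) × Fin m)) ∈ P.parts)

@[simp] lemma mem_sOf {P : Finpartition (univ : Finset (Fin (N+1) × Fin m))} {a : Fin m} :
    a ∈ sOf P ↔ ({((0 : Fin (N+1)), a)} : Finset (Fin (N+1) × Fin m)) ∈ P.parts := by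
  simp [sOf]

lemma r_disjoint {P : Finpartition (univ : Finset (Fin (N+1) × Fin m))}
    {p q : Finset (Fin (N+1) × Fin m)} (hp : p ∈ P.parts) (hq : q ∈ P.parts)
    (hne : p ≠ q) : Disjoint (r p) (r q) := by
  rw [Finset.disjoint_left]
  intro w hwp hwq
  exact hne (P.eq_of_mem_parts hp hq (mem_r.1 hwp) (mem_r.1 hwq))

/-- the restricted partition -/
def QOf (P : Finpartition (univ : Finset (Fin (N+1) × Fin m))) :
    Finpartition (univ : Finset (Fin N × Fin m)) :=
  Finpartition.ofErase (P.parts.image r)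
    (by
      rw [Finset.supIndep_iff_pairwiseDisjoint]
      intro x hx y hy hxy
      simp only [coe_image, Set.mem_image, mem_coe] at hx hy
      obtain ⟨p, hp, rfl⟩ := hx
      obtain ⟨q, hq, rfl⟩ := hy
      exact r_disjoint hp hq (fun h => hxy (by rw [h])))
    (by
      apply Finset.Subset.antisymm (fun x _ => mem_univ x)
      intro w _
      rw [Finset.mem_sup]
      obtain ⟨p, hp, hwp⟩ := P.exists_mem (mem_univ (e w))
      exact ⟨r p, mem_image_of_mem r hp, mem_r.2 hwp⟩)

lemma parts_QOf (P : Finpartition (univ : Finset (Fin (N+1) × Fin m))) :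
    (QOf P).parts = (P.parts.image r).erase ∅ := rfl

lemma mem_parts_QOf {P : Finpartition (univ : Finset (Fin (N+1) × Fin m))}
    {q : Finset (Fin N × Fin m)} :
    q ∈ (QOf P).parts ↔ q ≠ ∅ ∧ ∃ p ∈ P.parts, r p = q := by
  rw [parts_QOf, Finset.mem_erase, Finset.mem_image]

lemma QOf_colouring {P : Finpartition (univ : Finset (Fin (N+1) × Fin m))}
    (hc : IsColouring (cliqueUnion (N+1) m) P) : IsColouring (cliqueUnion N m) (QOf P) := by
  intro q hq x hx y hy hadj
  obtain ⟨-, p, hp, rfl⟩ := mem_parts_QOf.1 hq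
  exact hc p hp (e x) (mem_r.1 hx) (e y) (mem_r.1 hy)
    (cU_adj.2 ⟨congrArg Fin.succ (cU_adj.1 hadj).1, (cU_adj.1 hadj).2⟩)

/-- parts that die under restriction are exactly singletons of clique-0 colours in sOf -/
lemma r_eq_empty_part {P : Finpartition (univ : Finset (Fin (N+1) × Fin m))}
    (hc : IsColouring (cliqueUnion (N+1) m) P) {p} (hp : p ∈ P.parts) (h : r p = ∅) :
    ∃ a ∈ sOf P, p = {((0 : Fin (N+1)), a)} := by
  obtain ⟨v, hv⟩ := Finset.nonempty_iff_ne_empty.2 (P.ne_bot hp)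
  have hall : ∀ u ∈ p, u.1 = 0 := r_eq_empty_iff.1 h
  have hsing : p = {v} := by
    apply Finset.eq_singleton_iff_unique_mem.2 ⟨hv, fun u hu => ?_⟩
    exact stable_eq hc hp hu hv ((hall u hu).trans (hall v hv).symm)
  have hv0 : v = ((0 : Fin (N+1)), v.2) := Prod.ext (hall v hv) rfl
  refine ⟨v.2, mem_sOf.2 ?_, by rw [hsing, hv0]⟩
  rwa [← hv0, ← hsing]

lemma card_QOf {P : Finpartition (univ : Finset (Fin (N+1) × Fin m))} {k : ℕ}
    (hc : IsColouring (cliqueUnion (N+1) m) P) (hcard : P.parts.card = k) :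
    (QOf P).parts.card = k - (sOf P).card := by
  classical
  set B := P.parts.filter (fun p => r p = ∅) with hB
  set C := P.parts.filter (fun p => ¬ r p = ∅) with hC
  have himg : (QOf P).parts = C.image r := by
    rw [parts_QOf]
    ext q
    simp only [Finset.mem_erase, Finset.mem_image, hC, Finset.mem_filter]
    constructor
    · rintro ⟨hq, p, hp, rfl⟩
      exact ⟨p, ⟨hp, hq⟩, rfl⟩
    · rintro ⟨p, ⟨hp, hq⟩, rfl⟩
      exact ⟨hq, p, hp, rfl⟩
  have hinj : Set.InjOn r (C : Set (Finset (Fin (N+1) × Fin m))) := by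
    intro p hp q hq hpq
    simp only [hC, coe_filter, Set.mem_setOf_eq] at hp hq
    by_contra hne
    obtain ⟨w, hw⟩ := Finset.nonempty_iff_ne_empty.2 hp.2
    exact (Finset.disjoint_left.1 (r_disjoint hp.1 hq.1 hne) hw) (hpq ▸ hw)
  have hcc : (QOf P).parts.card = C.card := by
    rw [himg, Finset.card_image_of_injOn hinj]
  have hBeq : B = (sOf P).image (fun a => ({((0 : Fin (N+1)), a)} : Finset (Fin (N+1) × Fin m))) := by
    ext p
    simp only [hB, Finset.mem_filter, Finset.mem_image, mem_sOf]
    constructor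
    · rintro ⟨hp, hr⟩
      obtain ⟨a, ha, rfl⟩ := r_eq_empty_part hc hp hr
      exact ⟨a, mem_sOf.1 ha, rfl⟩
    · rintro ⟨a, ha, rfl⟩
      refine ⟨ha, ?_⟩
      rw [r_eq_empty_iff]
      intro v hv
      rw [Finset.mem_singleton] at hv
      rw [hv]
  have hBs : B.card = (sOf P).card := by
    rw [hBeq, Finset.card_image_of_injective _ ?_]
    intro a b h
    have := Finset.singleton_injective h
    exact (Prod.ext_iff.1 this).2
  have hsum : B.card + C.card = k := by
    rw [hB, hC, Finset.card_filter_add_card_filter_not, hcard]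
  omega

end RecAux

namespace RecAux

variable {m N : ℕ}

lemma part_ne_singleton {P : Finpartition (univ : Finset (Fin (N+1) × Fin m))} {a : Fin m}
    (ha : a ∉ sOf P) : P.part ((0 : Fin (N+1)), a) ≠ {((0 : Fin (N+1)), a)} := by
  intro h
  exact ha (mem_sOf.2 (h ▸ P.part_mem.2 (mem_univ _)))

lemma r_part_ne_empty {P : Finpartition (univ : Finset (Fin (N+1) × Fin m))}
    (hc : IsColouring (cliqueUnion (N+1) m) P) {a : Fin m} (ha : a ∉ sOf P) :
    r (P.part ((0 : Fin (N+1)), a)) ≠ ∅ := by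
  intro h
  obtain ⟨b, hb, hpb⟩ := r_eq_empty_part hc (P.part_mem.2 (mem_univ _)) h
  have hmem : ((0 : Fin (N+1)), a) ∈ P.part ((0 : Fin (N+1)), a) := P.mem_part (mem_univ _)
  rw [hpb, Finset.mem_singleton] at hmem
  have : a = b := (Prod.ext_iff.1 hmem).2
  exact part_ne_singleton ha (hpb.trans (by rw [this]))

lemma part_ne_of_ne {P : Finpartition (univ : Finset (Fin (N+1) × Fin m))}
    (hc : IsColouring (cliqueUnion (N+1) m) P) {a b : Fin m} (hab : a ≠ b) :
    P.part ((0 : Fin (N+1)), a) ≠ P.part ((0 : Fin (N+1)), b) := by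
  intro h
  have h1 : ((0 : Fin (N+1)), a) ∈ P.part ((0 : Fin (N+1)), b) := h ▸ P.mem_part (mem_univ _)
  have h2 : ((0 : Fin (N+1)), b) ∈ P.part ((0 : Fin (N+1)), b) := P.mem_part (mem_univ _)
  exact hab (Prod.ext_iff.1 (stable_eq hc (P.part_mem.2 (mem_univ _)) h1 h2 rfl)).2

/-- the data type for the recursion -/
def T (m N k : ℕ) : Type :=
  Σ s : Finset (Fin m), Σ Q : CT m N (k - s.card), ({a // a ∈ sᶜ} ↪ {q // q ∈ Q.1.parts})

/-- forward map -/
def fwd {k : ℕ} (x : CT m (N+1) k) : T m N k :=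
  ⟨sOf x.1,
   ⟨QOf x.1, card_QOf x.2.2 x.2.1, QOf_colouring x.2.2⟩,
   ⟨fun a => ⟨r (x.1.part ((0 : Fin (N+1)), a.1)),
      mem_parts_QOf.2 ⟨r_part_ne_empty x.2.2 (Finset.mem_compl.1 a.2),
        x.1.part ((0 : Fin (N+1)), a.1), x.1.part_mem.2 (mem_univ _), rfl⟩⟩,
    by
      rintro ⟨a, ha⟩ ⟨b, hb⟩ hab
      simp only [Subtype.mk.injEq] at hab ⊢
      by_contra hne
      have hne' : a ≠ b := fun h => hne h
      have hd := r_disjoint (x.1.part_mem.2 (mem_univ ((0 : Fin (N+1)), a)))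
        (x.1.part_mem.2 (mem_univ ((0 : Fin (N+1)), b))) (part_ne_of_ne x.2.2 hne')
      obtain ⟨w, hw⟩ := Finset.nonempty_iff_ne_empty.2
        (r_part_ne_empty x.2.2 (Finset.mem_compl.1 ha))
      exact Finset.disjoint_left.1 hd hw (hab ▸ hw)⟩⟩

end RecAux

namespace RecAux

variable {m N : ℕ}
variable {s : Finset (Fin m)} {Q : Finpartition (univ : Finset (Fin N × Fin m))}

section Bwd
variable (s Q)
variable (g : {a // a ∈ sᶜ} ↪ {q // q ∈ Q.parts})

/-- the colours assigned to part q -/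
def A (q : Finset (Fin N × Fin m)) : Finset (Fin m) :=
  (sᶜ.attach.filter (fun a => (g a : Finset (Fin N × Fin m)) = q)).image Subtype.val

lemma mem_A {a : Fin m} {q : Finset (Fin N × Fin m)} :
    a ∈ A s Q g q ↔ ∃ h : a ∈ sᶜ, (g ⟨a, h⟩ : Finset (Fin N × Fin m)) = q := by
  simp only [A, Finset.mem_image, Finset.mem_filter, Finset.mem_attach, true_and]
  constructor
  · rintro ⟨⟨a', ha'⟩, hg, rfl⟩
    exact ⟨ha', hg⟩
  · rintro ⟨h, hg⟩
    exact ⟨⟨a, h⟩, hg, rfl⟩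

lemma A_not_mem_s {a : Fin m} {q : Finset (Fin N × Fin m)} (h : a ∈ A s Q g q) : a ∉ s := by
  obtain ⟨h', -⟩ := (mem_A s Q g).1 h
  exact Finset.mem_compl.1 h'

/-- extend a part of Q by its assigned clique-0 vertices -/
def ext' (q : Finset (Fin N × Fin m)) : Finset (Fin (N+1) × Fin m) :=
  q.image e ∪ (A s Q g q).image (fun a => ((0 : Fin (N+1)), a))

lemma mem_ext' {v : Fin (N+1) × Fin m} {q : Finset (Fin N × Fin m)} :
    v ∈ ext' s Q g q ↔ (∃ w ∈ q, e w = v) ∨ ∃ a ∈ A s Q g q, ((0 : Fin (N+1)), a) = v := by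
  simp [ext']

lemma r_ext' (q : Finset (Fin N × Fin m)) : r (ext' s Q g q) = q := by
  ext w
  rw [mem_r, mem_ext' s Q g]
  constructor
  · rintro (⟨w', hw', hww⟩ | ⟨a, -, hav⟩)
    · rwa [← e_injective hww]
    · exact absurd (congrArg Prod.fst hav).symm (e_fst_ne_zero w)
  · intro hw
    exact Or.inl ⟨w, hw, rfl⟩

lemma ext'_nonempty {q : Finset (Fin N × Fin m)} (hq : q ∈ Q.parts) :
    (ext' s Q g q).Nonempty := by
  obtain ⟨w, hw⟩ := Finset.nonempty_iff_ne_empty.2 (Q.ne_bot hq)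
  exact ⟨e w, (mem_ext' s Q g).2 (Or.inl ⟨w, hw, rfl⟩)⟩

lemma singleton_ne_ext' {a : Fin m} {q : Finset (Fin N × Fin m)} (hq : q ∈ Q.parts) :
    ({((0 : Fin (N+1)), a)} : Finset (Fin (N+1) × Fin m)) ≠ ext' s Q g q := by
  intro h
  obtain ⟨w, hw⟩ := Finset.nonempty_iff_ne_empty.2 (Q.ne_bot hq)
  have : e w ∈ ext' s Q g q := (mem_ext' s Q g).2 (Or.inl ⟨w, hw, rfl⟩)
  rw [← h, Finset.mem_singleton] at this
  exact e_fst_ne_zero w (congrArg Prod.fst this.symm).symm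

/-- the reconstructed partition -/
def bwdP : Finpartition (univ : Finset (Fin (N+1) × Fin m)) where
  parts := Q.parts.image (ext' s Q g) ∪ s.image (fun a => {((0 : Fin (N+1)), a)})
  supIndep := by
    rw [Finset.supIndep_iff_pairwiseDisjoint]
    intro x hx y hy hxy
    simp only [coe_union, coe_image, Set.mem_union, Set.mem_image, mem_coe] at hx hy
    simp only [Function.onFun, id_eq]
    rcases hx with ⟨q, hq, rfl⟩ | ⟨a, ha, rfl⟩ <;> rcases hy with ⟨q', hq', rfl⟩ | ⟨a', ha', rfl⟩
    · have hqq : q ≠ q' := fun h => hxy (by rw [h])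
      rw [Finset.disjoint_left]
      intro v hv hv'
      rcases (mem_ext' s Q g).1 hv with ⟨w, hw, rfl⟩ | ⟨b, hb, rfl⟩
      · rcases (mem_ext' s Q g).1 hv' with ⟨w', hw', hww⟩ | ⟨b', hb', hbv⟩
        · rw [e_injective hww] at hw'
          exact hqq (Q.eq_of_mem_parts hq hq' hw hw')
        · exact e_fst_ne_zero w (congrArg Prod.fst hbv).symm
      · rcases (mem_ext' s Q g).1 hv' with ⟨w', hw', hww⟩ | ⟨b', hb', hbv⟩
        · exact e_fst_ne_zero w' (congrArg Prod.fst hww)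
        · have hbb : b = b' := (Prod.ext_iff.1 hbv).2.symm
          subst hbb
          obtain ⟨h1, e1⟩ := (mem_A s Q g).1 hb
          obtain ⟨h2, e2⟩ := (mem_A s Q g).1 hb'
          exact hqq (e1 ▸ e2 ▸ rfl)
    · rw [Finset.disjoint_left]
      intro v hv hv'
      rw [Finset.mem_singleton] at hv'
      subst hv'
      rcases (mem_ext' s Q g).1 hv with ⟨w, hw, hww⟩ | ⟨b, hb, hbv⟩
      · exact e_fst_ne_zero w (congrArg Prod.fst hww)
      · rw [show a' = b from ((Prod.ext_iff.1 hbv).2).symm] at ha'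
        exact A_not_mem_s s Q g hb ha'
    · rw [Finset.disjoint_right]
      intro v hv hv'
      rw [Finset.mem_singleton] at hv'
      subst hv'
      rcases (mem_ext' s Q g).1 hv with ⟨w, hw, hww⟩ | ⟨b, hb, hbv⟩
      · exact e_fst_ne_zero w (congrArg Prod.fst hww)
      · rw [show a = b from ((Prod.ext_iff.1 hbv).2).symm] at ha
        exact A_not_mem_s s Q g hb ha
    · rw [Finset.disjoint_left]
      intro v hv hv'
      rw [Finset.mem_singleton] at hv hv'
      exact hxy (by rw [← hv, hv'])
  sup_parts := by
    apply Finset.Subset.antisymm (fun x _ => mem_univ x)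
    intro v _
    rw [Finset.mem_sup]
    by_cases h0 : v.1 = 0
    · have hv : v = ((0 : Fin (N+1)), v.2) := Prod.ext h0 rfl
      by_cases hs : v.2 ∈ s
      · exact ⟨{((0 : Fin (N+1)), v.2)}, Finset.mem_union_right _ (Finset.mem_image_of_mem _ hs),
          Finset.mem_singleton.2 hv⟩
      · have hs' : v.2 ∈ sᶜ := Finset.mem_compl.2 hs
        refine ⟨ext' s Q g (g ⟨v.2, hs'⟩ : Finset (Fin N × Fin m)),
          Finset.mem_union_left _ (Finset.mem_image_of_mem _ (g ⟨v.2, hs'⟩).2), ?_⟩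
        exact (mem_ext' s Q g).2 (Or.inr ⟨v.2, (mem_A s Q g).2 ⟨hs', rfl⟩, hv.symm⟩)
    · obtain ⟨w, rfl⟩ := exists_e h0
      obtain ⟨q, hq, hwq⟩ := Q.exists_mem (mem_univ w)
      exact ⟨ext' s Q g q, Finset.mem_union_left _ (Finset.mem_image_of_mem _ hq),
        (mem_ext' s Q g).2 (Or.inl ⟨w, hwq, rfl⟩)⟩
  bot_notMem := by
    rw [Finset.mem_union]
    rintro (h | h) <;> rw [Finset.mem_image] at h
    · obtain ⟨q, hq, hq'⟩ := h
      exact Finset.nonempty_iff_ne_empty.1 (ext'_nonempty s Q g hq) hq'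
    · obtain ⟨a, ha, ha'⟩ := h
      exact Finset.singleton_ne_empty _ ha'

lemma parts_bwdP :
    (bwdP s Q g).parts = Q.parts.image (ext' s Q g) ∪ s.image (fun a => {((0 : Fin (N+1)), a)}) :=
  rfl

end Bwd
end RecAux

namespace RecAux

variable {m N : ℕ}

section Bwd2
variable (s : Finset (Fin m)) (Q : Finpartition (univ : Finset (Fin N × Fin m)))
variable (g : {a // a ∈ sᶜ} ↪ {q // q ∈ Q.parts})

lemma ext'_injOn : Set.InjOn (ext' s Q g) (Q.parts : Set (Finset (Fin N × Fin m))) := by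
  intro q hq q' hq' h
  rw [← r_ext' s Q g q, ← r_ext' s Q g q', h]

lemma disjoint_images :
    Disjoint (Q.parts.image (ext' s Q g))
      (s.image (fun a => ({((0 : Fin (N+1)), a)} : Finset (Fin (N+1) × Fin m)))) := by
  rw [Finset.disjoint_left]
  rintro x hx hx'
  obtain ⟨q, hq, rfl⟩ := Finset.mem_image.1 hx
  obtain ⟨a, ha, h⟩ := Finset.mem_image.1 hx'
  exact singleton_ne_ext' s Q g hq h

lemma card_bwdP : (bwdP s Q g).parts.card = Q.parts.card + s.card := by
  rw [parts_bwdP, Finset.card_union_of_disjoint (disjoint_images s Q g),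
    Finset.card_image_of_injOn (ext'_injOn s Q g),
    Finset.card_image_of_injective _ (fun a b h => (Prod.ext_iff.1 (Finset.singleton_injective h)).2)]

lemma colouring_bwdP (hcQ : IsColouring (cliqueUnion N m) Q) :
    IsColouring (cliqueUnion (N+1) m) (bwdP s Q g) := by
  intro p hp x hx y hy hadj
  rw [cU_adj] at hadj
  rw [parts_bwdP, Finset.mem_union] at hp
  rcases hp with hp | hp
  · obtain ⟨q, hq, rfl⟩ := Finset.mem_image.1 hp
    rcases (mem_ext' s Q g).1 hx with ⟨w, hw, rfl⟩ | ⟨a, ha, rfl⟩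
    · rcases (mem_ext' s Q g).1 hy with ⟨w', hw', rfl⟩ | ⟨a', ha', rfl⟩
      · exact hcQ q hq w hw w' hw' (cU_adj.2 ⟨Fin.succ_injective _ hadj.1, hadj.2⟩)
      · exact e_fst_ne_zero w (hadj.1)
    · rcases (mem_ext' s Q g).1 hy with ⟨w', hw', rfl⟩ | ⟨a', ha', rfl⟩
      · exact e_fst_ne_zero w' hadj.1.symm
      · obtain ⟨h1, e1⟩ := (mem_A s Q g).1 ha
        obtain ⟨h2, e2⟩ := (mem_A s Q g).1 ha'
        have : (⟨a, h1⟩ : {a // a ∈ sᶜ}) = ⟨a', h2⟩ :=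
          g.injective (Subtype.ext (e1.trans e2.symm))
        exact hadj.2 (congrArg Subtype.val this)
  · obtain ⟨a, ha, rfl⟩ := Finset.mem_image.1 hp
    rw [Finset.mem_singleton] at hx hy
    exact hadj.2 (by rw [hx, hy])

end Bwd2

/-- backward map -/
def bwd {k : ℕ} (hmk : m ≤ k) (t : T m N k) : CT m (N+1) k :=
  ⟨bwdP t.1 t.2.1.1 t.2.2,
   by
     have h1 := card_bwdP t.1 t.2.1.1 t.2.2
     have h2 := t.2.1.2.1
     have h3 : t.1.card ≤ m := by
       simpa using Finset.card_le_univ t.1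
     omega,
   colouring_bwdP t.1 t.2.1.1 t.2.2 t.2.1.2.2⟩

end RecAux

namespace RecAux

variable {m N k : ℕ}

lemma mem_A_fwd {x : CT m (N+1) k} {a : Fin m} {q : Finset (Fin N × Fin m)} :
    a ∈ A (sOf x.1) (QOf x.1) ((fwd x).2.2) q ↔
      ∃ _ : a ∈ (sOf x.1)ᶜ, r (x.1.part ((0 : Fin (N+1)), a)) = q := by
  exact mem_A _ _ _

lemma A_fwd_eq {x : CT m (N+1) k} {p : Finset (Fin (N+1) × Fin m)} (hp : p ∈ x.1.parts)
    (hr : r p ≠ ∅) {a : Fin m} :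
    a ∈ A (sOf x.1) (QOf x.1) ((fwd x).2.2) (r p) ↔ ((0 : Fin (N+1)), a) ∈ p := by
  rw [mem_A_fwd]
  constructor
  · rintro ⟨h, hq⟩
    obtain ⟨w, hw⟩ := Finset.nonempty_iff_ne_empty.2
      (r_part_ne_empty x.2.2 (Finset.mem_compl.1 h))
    have hw2 : e w ∈ p := mem_r.1 (hq ▸ hw)
    have := x.1.eq_of_mem_parts (x.1.part_mem.2 (mem_univ _)) hp (mem_r.1 hw) hw2
    exact this ▸ x.1.mem_part (mem_univ _)
  · intro h0
    have ha : a ∉ sOf x.1 := by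
      intro hs
      apply hr
      have : p = {((0 : Fin (N+1)), a)} :=
        x.1.eq_of_mem_parts hp (mem_sOf.1 hs) h0 (Finset.mem_singleton_self _)
      rw [this, r_eq_empty_iff]
      intro v hv
      rw [Finset.mem_singleton] at hv
      rw [hv]
    exact ⟨Finset.mem_compl.2 ha, by rw [x.1.part_eq_of_mem hp h0]⟩

lemma ext'_fwd {x : CT m (N+1) k} {p : Finset (Fin (N+1) × Fin m)} (hp : p ∈ x.1.parts)
    (hr : r p ≠ ∅) : ext' (sOf x.1) (QOf x.1) ((fwd x).2.2) (r p) = p := by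
  ext v
  refine (mem_ext' _ _ _).trans ?_
  constructor
  · rintro (⟨w, hw, rfl⟩ | ⟨a, ha, rfl⟩)
    · exact mem_r.1 hw
    · exact (A_fwd_eq hp hr).1 ha
  · intro hv
    by_cases h0 : v.1 = 0
    · have hv0 : v = ((0 : Fin (N+1)), v.2) := Prod.ext h0 rfl
      exact Or.inr ⟨v.2, (A_fwd_eq hp hr).2 (hv0 ▸ hv), hv0.symm⟩
    · obtain ⟨w, rfl⟩ := exists_e h0
      exact Or.inl ⟨w, mem_r.2 hv, rfl⟩

lemma bwd_fwd (hmk : m ≤ k) (x : CT m (N+1) k) : bwd hmk (fwd x) = x := by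
  apply Subtype.ext
  apply Finpartition.ext
  show (bwdP (sOf x.1) (QOf x.1) ((fwd x).2.2)).parts = x.1.parts
  refine (parts_bwdP _ _ _).trans ?_
  ext p
  rw [Finset.mem_union, Finset.mem_image, Finset.mem_image]
  constructor
  · rintro (⟨q, hq, rfl⟩ | ⟨a, ha, rfl⟩)
    · obtain ⟨hne, p', hp', rfl⟩ := mem_parts_QOf.1 hq
      rw [ext'_fwd hp' hne]
      exact hp'
    · exact mem_sOf.1 (by simpa using ha)
  · intro hp
    by_cases hr : r p = ∅
    · obtain ⟨a, ha, rfl⟩ := r_eq_empty_part x.2.2 hp hr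
      exact Or.inr ⟨a, by simpa using ha, rfl⟩
    · exact Or.inl ⟨r p, mem_parts_QOf.2 ⟨hr, p, hp, rfl⟩, ext'_fwd hp hr⟩

end RecAux

namespace RecAux

variable {m N k : ℕ}

section BwdInj
variable (s : Finset (Fin m)) (Q : Finpartition (univ : Finset (Fin N × Fin m)))
variable (g : {a // a ∈ sᶜ} ↪ {q // q ∈ Q.parts})

lemma sOf_bwdP : sOf (bwdP s Q g) = s := by
  ext a
  rw [mem_sOf, parts_bwdP, Finset.mem_union, Finset.mem_image, Finset.mem_image]
  constructor
  · rintro (⟨q, hq, h⟩ | ⟨a', ha', h⟩)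
    · exact absurd h.symm (singleton_ne_ext' s Q g hq)
    · rwa [show a' = a from (Prod.ext_iff.1 (Finset.singleton_injective h)).2] at ha'
  · intro ha
    exact Or.inr ⟨a, ha, rfl⟩

lemma r_singleton (a : Fin m) :
    r ({((0 : Fin (N+1)), a)} : Finset (Fin (N+1) × Fin m)) = ∅ := by
  rw [r_eq_empty_iff]
  intro v hv
  rw [Finset.mem_singleton] at hv
  rw [hv]

lemma QOf_bwdP : QOf (bwdP s Q g) = Q := by
  apply Finpartition.ext
  rw [parts_QOf]
  ext q
  rw [Finset.mem_erase, Finset.mem_image]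
  constructor
  · rintro ⟨hne, p, hp, rfl⟩
    rw [parts_bwdP, Finset.mem_union, Finset.mem_image, Finset.mem_image] at hp
    rcases hp with ⟨q', hq', rfl⟩ | ⟨a, ha, rfl⟩
    · rwa [r_ext']
    · exact absurd (r_singleton a) hne
  · intro hq
    refine ⟨?_, ext' s Q g q, ?_, r_ext' s Q g q⟩
    · exact Q.ne_bot hq
    · rw [parts_bwdP, Finset.mem_union]
      exact Or.inl (Finset.mem_image_of_mem _ hq)

lemma part_bwdP {a : Fin m} (ha : a ∈ sᶜ) :
    (bwdP s Q g).part ((0 : Fin (N+1)), a) = ext' s Q g (g ⟨a, ha⟩ : Finset (Fin N × Fin m)) := by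
  apply (bwdP s Q g).part_eq_of_mem
  · rw [parts_bwdP, Finset.mem_union]
    exact Or.inl (Finset.mem_image_of_mem _ (g ⟨a, ha⟩).2)
  · exact (mem_ext' s Q g).2 (Or.inr ⟨a, (mem_A s Q g).2 ⟨ha, rfl⟩, rfl⟩)

end BwdInj

lemma bwd_injective (hmk : m ≤ k) : Function.Injective (bwd (m := m) (N := N) hmk) := by
  rintro ⟨s, Q, g⟩ ⟨s', Q', g'⟩ h
  have hP : bwdP s Q.1 g = bwdP s' Q'.1 g' := congrArg Subtype.val h
  have hs : s = s' := by rw [← sOf_bwdP s Q.1 g, ← sOf_bwdP s' Q'.1 g', hP]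
  subst hs
  have hQ : Q = Q' := by
    apply Subtype.ext
    rw [← QOf_bwdP s Q.1 g, ← QOf_bwdP s Q'.1 g', hP]
  subst hQ
  have hg : g = g' := by
    apply Function.Embedding.ext
    rintro ⟨a, ha⟩
    apply Subtype.ext
    have h1 := part_bwdP s Q.1 g ha
    have h2 := part_bwdP s Q.1 g' ha
    rw [hP] at h1
    have h3 := h1.symm.trans h2
    calc (g ⟨a, ha⟩ : Finset (Fin N × Fin m))
        = r (ext' s Q.1 g (g ⟨a, ha⟩ : Finset (Fin N × Fin m))) := (r_ext' _ _ _ _).symm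
      _ = r (ext' s Q.1 g' (g' ⟨a, ha⟩ : Finset (Fin N × Fin m))) := by rw [h3]
      _ = (g' ⟨a, ha⟩ : Finset (Fin N × Fin m)) := r_ext' _ _ _ _
  subst hg
  rfl

end RecAux

namespace RecAux

variable {m N k : ℕ}

noncomputable instance instFintypeCT : Fintype (CT m N k) := by
  unfold CT
  classical
  infer_instance

noncomputable instance instFintypeT : Fintype (T m N k) := by
  unfold T
  classical
  infer_instance

lemma card_CT_eq_card_T (hmk : m ≤ k) : Nat.card (CT m (N+1) k) = Nat.card (T m N k) := by
  apply Nat.le_antisymm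
  · exact Nat.card_le_card_of_injective _ (Function.LeftInverse.injective (bwd_fwd hmk))
  · exact Nat.card_le_card_of_injective _ (bwd_injective hmk)

lemma card_T (hmk : m ≤ k) :
    Nat.card (T m N k) =
      ∑ s : Finset (Fin m), Nat.card (CT m N (k - s.card)) * (k - s.card).descFactorial (m - s.card) := by
  classical
  rw [Nat.card_eq_fintype_card]
  unfold T
  rw [Fintype.card_sigma]
  apply Finset.sum_congr rfl
  intro s _
  rw [Fintype.card_sigma]
  have hcard : ∀ Q : CT m N (k - s.card),
      Fintype.card ({a // a ∈ sᶜ} ↪ {q // q ∈ Q.1.parts}) =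
        (k - s.card).descFactorial (m - s.card) := by
    intro Q
    rw [Fintype.card_embedding_eq]
    congr 1
    · rw [Fintype.card_coe, Q.2.1]
    · rw [Fintype.card_coe, Finset.card_compl, Fintype.card_fin]
  rw [Finset.sum_congr rfl (fun Q _ => hcard Q), Finset.sum_const, Finset.card_univ,
    Nat.card_eq_fintype_card, smul_eq_mul]

lemma numColourings_eq_card_CT (N k : ℕ) :
    numColourings (cliqueUnion N m) k = Nat.card (CT m N k) := rfl

lemma main_rec (hmk : m ≤ k) :
    numColourings (cliqueUnion (N+1) m) k =
      ∑ i ∈ Finset.range (m + 1),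
        m.choose i * (k - i).descFactorial (m - i) * numColourings (cliqueUnion N m) (k - i) := by
  classical
  rw [numColourings_eq_card_CT, card_CT_eq_card_T hmk, card_T hmk]
  have h1 : (univ : Finset (Finset (Fin m))) = (univ : Finset (Fin m)).powerset := by
    rw [Finset.powerset_univ]
  rw [h1, Finset.powerset_card_disjiUnion]
  refine (Finset.sum_disjiUnion _ _ _).trans ?_
  have h2 : (univ : Finset (Fin m)).card = m := by simp
  rw [h2]
  apply Finset.sum_congr rfl
  intro i _
  rw [Finset.sum_powersetCard i univ
    (fun j => Nat.card (CT m N (k - j)) * (k - j).descFactorial (m - j))]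
  rw [h2, smul_eq_mul, numColourings_eq_card_CT]
  ring

end RecAux

theorem recurrence_for_colourings_of_clique_unions
    (m n k : ℕ) (hm : 1 ≤ m) (hn : 2 ≤ n) (hk : m ≤ k) :
    numColourings (cliqueUnion n m) k =
      ∑ i ∈ Finset.range (m + 1),
        m.choose i * (k - i).descFactorial (m - i) *
          numColourings (cliqueUnion (n - 1) m) (k - i) := by
  obtain ⟨N, rfl⟩ : ∃ N, n = N + 1 := ⟨n - 1, by omega⟩
  rw [Nat.add_sub_cancel]
  exact RecAux.main_rec hk
end

section
/- Define S_m(n,k) by the recurrence S_m(1,m)=1, S_m(1,k)=0 for k≠m, S_m(n,k)=0 for k<m, and S_m(n+1,k) = Σ_{p=0}^{m} C(k+p−m, p) · (m)_p · S_m(n, k+p−m) for n ≥ 1. Then for all positive integers m, n, k, S_m(n,k) equals the number of k-colourings of nK_m. -/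
open Finset

set_option linter.unusedSectionVars false

def GProper {V : Type*} {k : ℕ} (G : SimpleGraph V) (f : V → Fin k) : Prop :=
  ∀ ⦃x y⦄, G.Adj x y → f x ≠ f y

noncomputable def surjCount {V : Type*} [Fintype V] (G : SimpleGraph V) (k : ℕ) : ℕ :=
  Nat.card {f : V → Fin k // Function.Surjective f ∧ GProper G f}

lemma card_eq_natCard_subtype {α : Type*} (s : Finset α) (p : α → Prop)
    (h : ∀ x, x ∈ s ↔ p x) : s.card = Nat.card {x // p x} := by
  rw [← Nat.card_eq_finsetCard s]
  exact Nat.card_congr (Equiv.subtypeEquivRight h)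

def properEquiv (n m k : ℕ) :
    {f : Fin n × Fin m → Fin k // GProper (cliqueUnion n m) f} ≃ (Fin n → (Fin m ↪ Fin k)) where
  toFun f := fun i => ⟨fun a => f.1 (i, a), by
    intro a b hab
    by_contra hne
    exact f.2 (show (cliqueUnion n m).Adj (i,a) (i,b) from And.intro rfl hne) hab⟩
  invFun F := ⟨fun x => F x.1 x.2, by
    rintro ⟨i, a⟩ ⟨i', b⟩ (⟨h1, h2⟩ : (i, a).1 = (i', b).1 ∧ (i, a).2 ≠ (i', b).2) heq
    dsimp at h1 h2 heq
    subst h1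
    exact h2 ((F i).injective heq)⟩
  left_inv f := Subtype.ext (funext fun x => rfl)
  right_inv F := funext fun i => DFunLike.ext _ _ fun a => rfl

lemma count_proper (n m k : ℕ) :
    Nat.card {f : Fin n × Fin m → Fin k // GProper (cliqueUnion n m) f}
      = (k.descFactorial m)^n := by
  rw [Nat.card_congr (properEquiv n m k), Nat.card_fun]
  simp [Nat.card_eq_fintype_card, Fintype.card_embedding_eq]

def imageEquiv {V : Type*} [Fintype V] [DecidableEq V] (G : SimpleGraph V) (k : ℕ)
    (I : Finset (Fin k)) :
    {f : V → Fin k // GProper G f ∧ univ.image f = I}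
      ≃ {g : V → Fin (I.card) // Function.Surjective g ∧ GProper G g} where
  toFun f := ⟨fun x => (I.orderIsoOfFin rfl).symm ⟨f.1 x, by
      have h := mem_image_of_mem f.1 (mem_univ x)
      rwa [f.2.2] at h⟩, by
    constructor
    · intro c
      have himg : ∀ y : Fin k, y ∈ I → ∃ x, f.1 x = y := by
        intro y hy
        rw [← f.2.2, Finset.mem_image] at hy
        obtain ⟨x, -, hx⟩ := hy
        exact ⟨x, hx⟩
      obtain ⟨x, hx⟩ := himg _ ((I.orderIsoOfFin rfl) c).2
      refine ⟨x, ?_⟩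
      dsimp only
      rw [OrderIso.symm_apply_eq]
      exact Subtype.ext hx
    · intro x y hadj heq
      have := (I.orderIsoOfFin rfl).symm.injective heq
      exact f.2.1 hadj (congrArg Subtype.val this)⟩
  invFun g := ⟨fun x => ((I.orderIsoOfFin rfl) (g.1 x) : Fin k), by
    constructor
    · intro x y hadj heq
      exact g.2.2 hadj ((I.orderIsoOfFin rfl).injective (Subtype.ext heq))
    · ext y
      simp only [Finset.mem_image, mem_univ, true_and]
      constructor
      · rintro ⟨x, rfl⟩
        exact ((I.orderIsoOfFin rfl) (g.1 x)).2
      · intro hy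
        obtain ⟨x, hx⟩ := g.2.1 ((I.orderIsoOfFin rfl).symm ⟨y, hy⟩)
        exact ⟨x, by rw [hx]; simp⟩⟩
  left_inv f := Subtype.ext (funext fun x => by simp)
  right_inv g := Subtype.ext (funext fun x =>
    (I.orderIsoOfFin rfl).symm_apply_apply (g.1 x))

lemma sum_choose_surjCount (n m k : ℕ) :
    ∑ j ∈ range (k+1), k.choose j * surjCount (cliqueUnion n m) j
      = (k.descFactorial m)^n := by
  classical
  set s := univ.filter (fun f : Fin n × Fin m → Fin k => GProper (cliqueUnion n m) f) with hs
  have hsmem : ∀ f, f ∈ s ↔ GProper (cliqueUnion n m) f := by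
    intro f; rw [hs, Finset.mem_filter]; simp
  have h0 : (k.descFactorial m)^n = s.card := by
    rw [card_eq_natCard_subtype s _ hsmem, count_proper n m k]
  have hmap : ∀ f ∈ s, univ.image f ∈ (univ : Finset (Fin k)).powerset :=
    fun f _ => mem_powerset.2 (subset_univ _)
  have h2 := Finset.card_eq_sum_card_fiberwise hmap
  have hfib : ∀ I ∈ (univ : Finset (Fin k)).powerset,
      (s.filter (fun f => univ.image f = I)).card = surjCount (cliqueUnion n m) I.card := by
    intro I _
    rw [card_eq_natCard_subtype (s.filter (fun f => univ.image f = I))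
      (fun f => GProper (cliqueUnion n m) f ∧ univ.image f = I)
      (by intro f; rw [Finset.mem_filter, hsmem f])]
    rw [Nat.card_congr (imageEquiv (cliqueUnion n m) k I)]
    rfl
  rw [← h0] at h2
  rw [h2, Finset.sum_congr rfl hfib,
    Finset.sum_powerset_apply_card (fun j => surjCount (cliqueUnion n m) j)]
  simp [smul_eq_mul]


/-- vandermonde-type identity -/
lemma key_identity (m k i : ℕ) (hik : i ≤ k) :
    ∑ p ∈ range (m+1), k.choose (i+(m-p)) * (i+(m-p)).factorial * (i.choose p * m.descFactorial p)
      = k.descFactorial m * (k.choose i * i.factorial) := by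
  have step : ∀ p ∈ range (m+1),
      k.choose (i+(m-p)) * (i+(m-p)).factorial * (i.choose p * m.descFactorial p)
        = (i.choose p * (k-i).choose (m-p)) * (k.choose i * i.factorial * m.factorial) := by
    intro p hp
    rw [mem_range, Nat.lt_succ_iff] at hp
    set j := i + (m - p) with hj
    have hij : i ≤ j := Nat.le_add_right _ _
    have hji : j - i = m - p := by omega
    -- j! = C(j,i) * i! * (j-i)!
    have hfac : j.factorial = j.choose i * i.factorial * (j - i).factorial :=
      (Nat.choose_mul_factorial_mul_factorial hij).symm
    have hdesc : m.descFactorial p * (m-p).factorial = m.factorial := by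
      rw [Nat.descFactorial_eq_factorial_mul_choose,
        ← Nat.choose_mul_factorial_mul_factorial hp]
      ring
    have tri : k.choose j * j.choose i = k.choose i * (k-i).choose (j-i) := by
      rcases le_or_gt j k with h | h
      · exact Nat.choose_mul hij
      · rw [Nat.choose_eq_zero_of_lt h,
          Nat.choose_eq_zero_of_lt (show k - i < j - i by omega), zero_mul, mul_zero]
    calc k.choose j * j.factorial * (i.choose p * m.descFactorial p)
        = (k.choose j * j.choose i) * i.choose p * (i.factorial * ((j-i).factorial * m.descFactorial p)) := by
          rw [hfac]; ring
      _ = (k.choose i * (k-i).choose (j-i)) * i.choose p * (i.factorial * m.factorial) := by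
          rw [tri, hji, mul_comm ((m-p).factorial), hdesc]
      _ = (i.choose p * (k-i).choose (m-p)) * (k.choose i * i.factorial * m.factorial) := by
          rw [hji]; ring
  rw [Finset.sum_congr rfl step, ← Finset.sum_mul]
  have vdm : ∑ p ∈ range (m+1), i.choose p * (k-i).choose (m-p) = k.choose m := by
    have := Nat.add_choose_eq i (k-i) m
    rw [Nat.add_sub_cancel' hik] at this
    rw [this, Finset.Nat.sum_antidiagonal_eq_sum_range_succ_mk]
  rw [vdm, Nat.descFactorial_eq_factorial_mul_choose]
  ring

lemma binomial_transform_inj (a b : ℕ → ℕ)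
    (h : ∀ k, ∑ j ∈ range (k+1), k.choose j * a j = ∑ j ∈ range (k+1), k.choose j * b j) :
    ∀ k, a k = b k := by
  intro k
  induction k using Nat.strong_induction_on with
  | _ k ih =>
    have hk := h k
    rw [Finset.sum_range_succ, Finset.sum_range_succ] at hk
    have heq : ∑ j ∈ range k, k.choose j * a j = ∑ j ∈ range k, k.choose j * b j :=
      Finset.sum_congr rfl fun j hj => by rw [ih j (mem_range.1 hj)]
    simpa [heq, Nat.choose_self] using hk
lemma sum_choose_S (m : ℕ) (hm : 1 ≤ m) (S : ℕ → ℕ → ℕ)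
    (h1 : S 1 m = 1)
    (h1' : ∀ k, k ≠ m → S 1 k = 0)
    (h0 : ∀ n k, k < m → S n k = 0)
    (hrec : ∀ n, 1 ≤ n → ∀ k,
      S (n + 1) k = ∑ p ∈ Finset.range (m + 1),
        (k + p - m).choose p * m.descFactorial p * S n (k + p - m)) :
    ∀ n, 1 ≤ n → ∀ k,
      ∑ j ∈ range (k+1), k.choose j * (j.factorial * S n j) = (k.descFactorial m)^n := by
  intro n hn
  induction n, hn using Nat.le_induction with
  | base =>
    intro k
    rw [pow_one]
    rw [Finset.sum_eq_single m]
    · rw [h1, Nat.descFactorial_eq_factorial_mul_choose]; ring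
    · intro j _ hj; rw [h1' j hj]; ring
    · intro hmk
      rw [mem_range, Nat.lt_succ_iff, not_le] at hmk
      rw [Nat.choose_eq_zero_of_lt hmk, zero_mul]
  | succ n hn ih =>
    intro k
    have expand : ∑ j ∈ range (k+1), k.choose j * (j.factorial * S (n+1) j)
        = ∑ q ∈ range (k+1) ×ˢ range (m+1),
            k.choose q.1 * q.1.factorial * ((q.1+q.2-m).choose q.2 * m.descFactorial q.2)
              * S n (q.1+q.2-m) := by
      rw [Finset.sum_product]
      refine Finset.sum_congr rfl fun j _ => ?_
      rw [hrec n hn j, Finset.mul_sum, Finset.mul_sum]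
      exact Finset.sum_congr rfl fun p _ => by ring
    set A := (range (k+1) ×ˢ range (m+1)).filter (fun q => m ≤ q.1 + q.2) with hA
    set B := (range (k+1) ×ˢ range (m+1)).filter (fun q => q.1 + (m - q.2) ≤ k) with hB
    have stepA : ∑ q ∈ range (k+1) ×ˢ range (m+1),
            k.choose q.1 * q.1.factorial * ((q.1+q.2-m).choose q.2 * m.descFactorial q.2)
              * S n (q.1+q.2-m)
        = ∑ q ∈ A, k.choose q.1 * q.1.factorial
            * ((q.1+q.2-m).choose q.2 * m.descFactorial q.2) * S n (q.1+q.2-m) := by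
      refine (Finset.sum_subset (Finset.filter_subset _ _) ?_).symm
      intro q hq hqA
      rw [Finset.mem_filter, not_and] at hqA
      have hlt : q.1 + q.2 < m := by
        by_contra hc; exact (hqA hq) (by omega)
      have : q.1 + q.2 - m = 0 := by omega
      rw [this, h0 n 0 hm, mul_zero]
    have stepAB : ∑ q ∈ A, k.choose q.1 * q.1.factorial
            * ((q.1+q.2-m).choose q.2 * m.descFactorial q.2) * S n (q.1+q.2-m)
        = ∑ q ∈ B, k.choose (q.1+(m-q.2)) * (q.1+(m-q.2)).factorial
            * (q.1.choose q.2 * m.descFactorial q.2) * S n q.1 := by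
      refine Finset.sum_bij' (fun q _ => (q.1+q.2-m, q.2)) (fun q _ => (q.1+(m-q.2), q.2))
        ?_ ?_ ?_ ?_ ?_
      · intro q hq
        rw [Finset.mem_filter, Finset.mem_product, mem_range, mem_range] at hq
        rw [Finset.mem_filter, Finset.mem_product, mem_range, mem_range]
        refine ⟨⟨by omega, by omega⟩, by omega⟩
      · intro q hq
        rw [Finset.mem_filter, Finset.mem_product, mem_range, mem_range] at hq
        rw [Finset.mem_filter, Finset.mem_product, mem_range, mem_range]
        refine ⟨⟨by omega, by omega⟩, by omega⟩
      · intro q hq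
        rw [Finset.mem_filter, Finset.mem_product, mem_range, mem_range] at hq
        have h1 : q.1 + q.2 - m + (m - q.2) = q.1 := by omega
        dsimp only
        simp only [h1]
      · intro q hq
        rw [Finset.mem_filter, Finset.mem_product, mem_range, mem_range] at hq
        have h1 : q.1 + (m - q.2) + q.2 - m = q.1 := by omega
        dsimp only
        simp only [h1]
      · intro q hq
        rw [Finset.mem_filter, Finset.mem_product, mem_range, mem_range] at hq
        have h1 : q.1 + q.2 - m + (m - q.2) = q.1 := by omega
        dsimp only
        simp only [h1]
    have stepB : ∑ q ∈ B, k.choose (q.1+(m-q.2)) * (q.1+(m-q.2)).factorial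
            * (q.1.choose q.2 * m.descFactorial q.2) * S n q.1
        = ∑ q ∈ range (k+1) ×ˢ range (m+1), k.choose (q.1+(m-q.2)) * (q.1+(m-q.2)).factorial
            * (q.1.choose q.2 * m.descFactorial q.2) * S n q.1 := by
      refine Finset.sum_subset (Finset.filter_subset _ _) ?_
      intro q hq hqB
      rw [Finset.mem_filter, not_and] at hqB
      have hlt : k < q.1 + (m - q.2) := by
        by_contra hc; exact (hqB hq) (by omega)
      rw [Nat.choose_eq_zero_of_lt hlt, zero_mul, zero_mul, zero_mul]
    have final : ∑ q ∈ range (k+1) ×ˢ range (m+1), k.choose (q.1+(m-q.2)) * (q.1+(m-q.2)).factorial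
            * (q.1.choose q.2 * m.descFactorial q.2) * S n q.1
        = k.descFactorial m ^ (n+1) := by
      rw [Finset.sum_product]
      have inner : ∀ i ∈ range (k+1),
          ∑ p ∈ range (m+1), k.choose (i+(m-p)) * (i+(m-p)).factorial
            * (i.choose p * m.descFactorial p) * S n i
          = k.descFactorial m * (k.choose i * (i.factorial * S n i)) := by
        intro i hi
        rw [← Finset.sum_mul, key_identity m k i (by rw [mem_range] at hi; omega)]
        ring
      rw [Finset.sum_congr rfl inner, ← Finset.mul_sum, ih k, pow_succ]
      ring
    rw [expand, stepA, stepAB, stepB, final]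

section L1
variable {V : Type*} [Fintype V] [DecidableEq V] {k : ℕ} (G : SimpleGraph V)


/-- the fiber of `f` over colour `c` -/
def fib (f : V → Fin k) (c : Fin k) : Finset V := univ.filter (fun v => f v = c)

/-- the set of fibers of `f` -/
def fibs (f : V → Fin k) : Finset (Finset V) := univ.image (fib f)

lemma mem_fib {f : V → Fin k} {v : V} {c : Fin k} : v ∈ fib f c ↔ f v = c := by
  simp [fib]

lemma self_mem_fib {f : V → Fin k} (v : V) : v ∈ fib f (f v) := mem_fib.2 rfl

lemma fib_nonempty {f : V → Fin k} (hf : Function.Surjective f) (c : Fin k) :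
    (fib f c).Nonempty := by
  obtain ⟨v, hv⟩ := hf c
  exact ⟨v, mem_fib.2 hv⟩

lemma fib_injective {f : V → Fin k} (hf : Function.Surjective f) :
    Function.Injective (fib f) := by
  intro c c' h
  obtain ⟨v, hv⟩ := fib_nonempty hf c
  have hv' : v ∈ fib f c' := h ▸ hv
  rw [mem_fib] at hv hv'
  rw [← hv, hv']

/-- the partition of `univ` into fibers of a surjective map -/
def fiberPartition (f : V → Fin k) (hf : Function.Surjective f) :
    Finpartition (univ : Finset V) where
  parts := fibs f
  supIndep := by
    rw [Finset.supIndep_iff_pairwiseDisjoint]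
    intro x hx y hy hxy
    simp only [Finset.coe_image, Set.mem_image, fibs] at hx hy
    obtain ⟨c, -, rfl⟩ := hx
    obtain ⟨c', -, rfl⟩ := hy
    simp only [Function.onFun, id_eq]
    rw [Finset.disjoint_left]
    intro v hv hv'
    rw [mem_fib] at hv hv'
    exact hxy (by rw [← hv, hv'])
  sup_parts := by
    apply le_antisymm le_top
    intro v _
    rw [Finset.mem_sup]
    exact ⟨fib f (f v), mem_image_of_mem _ (mem_univ _), self_mem_fib v⟩
  bot_notMem := by
    simp only [Finset.bot_eq_empty, fibs, Finset.mem_image]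
    rintro ⟨c, -, hc⟩
    obtain ⟨v, hv⟩ := fib_nonempty hf c
    rw [hc] at hv
    exact absurd hv (Finset.notMem_empty v)

lemma card_fibs {f : V → Fin k} (hf : Function.Surjective f) : (fibs f).card = k := by
  rw [fibs, Finset.card_image_of_injective _ (fib_injective hf), card_univ, Fintype.card_fin]

/-- Common construction: from a "partition-like" family `b` with an equivalence to `Fin k`,
produce a surjective proper colouring function whose fibers are exactly `b`. -/
lemma exists_fun_of_parts (b : Finset (Finset V))
    (hcover : ∀ v : V, ∃ x ∈ b, v ∈ x)
    (hdisj : ∀ x ∈ b, ∀ y ∈ b, ∀ v : V, v ∈ x → v ∈ y → x = y)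
    (hne : ∀ x ∈ b, x.Nonempty)
    (hstab : ∀ x ∈ b, ∀ u ∈ x, ∀ w ∈ x, ¬ G.Adj u w)
    (e : {x // x ∈ b} ≃ Fin k) :
    ∃ f : V → Fin k, Function.Surjective f ∧ GProper G f ∧
      (∀ c, fib f c = ((e.symm c : {x // x ∈ b}) : Finset V)) ∧ fibs f = b := by
  classical
  have hpt : ∀ v : V, ∃ x : {x // x ∈ b}, v ∈ (x : Finset V) := by
    intro v; obtain ⟨x, hx, hvx⟩ := hcover v; exact ⟨⟨x, hx⟩, hvx⟩
  choose pt hpt' using hpt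
  have hptu : ∀ (v : V) (x : {x // x ∈ b}), v ∈ (x : Finset V) → pt v = x := by
    intro v x hvx
    exact Subtype.ext (hdisj _ (pt v).2 _ x.2 v (hpt' v) hvx)
  refine ⟨fun v => e (pt v), ?_, ?_, ?_, ?_⟩
  · intro c
    obtain ⟨v, hv⟩ := hne _ (e.symm c).2
    exact ⟨v, by show e (pt v) = c; rw [hptu v _ hv, Equiv.apply_symm_apply]⟩
  · intro u w hadj heq
    have := e.injective heq
    exact hstab _ (pt u).2 u (hpt' u) w (by rw [this]; exact hpt' w) hadj
  · intro c
    ext v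
    rw [mem_fib]
    constructor
    · intro hc
      have : pt v = e.symm c := by rw [← hc, Equiv.symm_apply_apply]
      rw [← this]; exact hpt' v
    · intro hv
      rw [hptu v _ hv, Equiv.apply_symm_apply]
  · ext x
    simp only [fibs, Finset.mem_image, mem_univ, true_and]
    constructor
    · rintro ⟨c, rfl⟩
      have : fib (fun v => e (pt v)) c = ((e.symm c : {x // x ∈ b}) : Finset V) := by
        ext v
        rw [mem_fib]
        constructor
        · intro hc
          have : pt v = e.symm c := by rw [← hc, Equiv.symm_apply_apply]
          rw [← this]; exact hpt' v
        · intro hv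
          rw [hptu v _ hv, Equiv.apply_symm_apply]
      rw [this]; exact (e.symm c).2
    · intro hx
      refine ⟨e ⟨x, hx⟩, ?_⟩
      ext v
      rw [mem_fib]
      constructor
      · intro hc
        have h1 : pt v = ⟨x, hx⟩ := e.injective hc
        have h2 := hpt' v
        rw [h1] at h2
        exact h2
      · intro hv
        rw [hptu v ⟨x, hx⟩ hv]

def gmap {k : ℕ} (b : Finset (Finset V)) (f : V → Fin k) (hfb : fibs f = b) :
    Fin k → {x // x ∈ b} :=
  fun c => ⟨fib f c, hfb ▸ mem_image_of_mem (fib f) (mem_univ c)⟩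

lemma gmap_val {k : ℕ} {b : Finset (Finset V)} {f : V → Fin k} {hfb : fibs f = b} (c : Fin k) :
    (gmap b f hfb c : Finset V) = fib f c := rfl

lemma gmap_bijective {k : ℕ} {b : Finset (Finset V)} {f : V → Fin k} (hfs : Function.Surjective f)
    (hfb : fibs f = b) : Function.Bijective (gmap b f hfb) := by
  constructor
  · intro c c' h
    exact fib_injective hfs (congrArg Subtype.val h)
  · rintro ⟨x, hx⟩
    rw [← hfb] at hx
    obtain ⟨c, -, hc⟩ := Finset.mem_image.1 hx
    exact ⟨c, Subtype.ext hc⟩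

lemma fiber_count {k : ℕ} (G : SimpleGraph V) (b : Finset (Finset V)) (f₀ : V → Fin k)
    (hf₀s : Function.Surjective f₀) (hf₀p : GProper G f₀) (hb : fibs f₀ = b) :
    Nat.card {f : V → Fin k // (Function.Surjective f ∧ GProper G f) ∧ fibs f = b}
      = k.factorial := by
  classical
  set F : {f : V → Fin k // (Function.Surjective f ∧ GProper G f) ∧ fibs f = b}
      → ({x // x ∈ b} ≃ Fin k) :=
    fun f => (Equiv.ofBijective (gmap b f.1 f.2.2) (gmap_bijective f.2.1.1 f.2.2)).symm with hF
  have hFbij : Function.Bijective F := by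
    constructor
    · intro f f' heq
      have h2 := congrArg Equiv.symm heq
      rw [hF, Equiv.symm_symm, Equiv.symm_symm] at h2
      have h3 : ∀ c, fib f.1 c = fib f'.1 c := by
        intro c
        have h4 := DFunLike.congr_fun h2 c
        exact congrArg Subtype.val h4
      apply Subtype.ext
      funext v
      have hv := self_mem_fib (f := f.1) v
      rw [h3] at hv
      exact (mem_fib.1 hv).symm
    · intro e
      have hcover : ∀ v : V, ∃ x ∈ b, v ∈ x := by
        intro v
        exact ⟨fib f₀ (f₀ v), by rw [← hb]; exact mem_image_of_mem _ (mem_univ _),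
          self_mem_fib v⟩
      have hdisj : ∀ x ∈ b, ∀ y ∈ b, ∀ v : V, v ∈ x → v ∈ y → x = y := by
        intro x hx y hy v hvx hvy
        rw [← hb] at hx hy
        obtain ⟨c, -, rfl⟩ := Finset.mem_image.1 hx
        obtain ⟨c', -, rfl⟩ := Finset.mem_image.1 hy
        rw [mem_fib] at hvx hvy
        rw [← hvx, hvy]
      have hne : ∀ x ∈ b, x.Nonempty := by
        intro x hx
        rw [← hb] at hx
        obtain ⟨c, -, rfl⟩ := Finset.mem_image.1 hx
        exact fib_nonempty hf₀s c
      have hstab : ∀ x ∈ b, ∀ u ∈ x, ∀ w ∈ x, ¬ G.Adj u w := by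
        intro x hx u hu w hw hadj
        rw [← hb] at hx
        obtain ⟨c, -, rfl⟩ := Finset.mem_image.1 hx
        rw [mem_fib] at hu hw
        exact hf₀p hadj (by rw [hu, hw])
      obtain ⟨f, hfs, hfp, hfib, hfibs⟩ := exists_fun_of_parts G b hcover hdisj hne hstab e
      refine ⟨⟨f, ⟨hfs, hfp⟩, hfibs⟩, ?_⟩
      have key : Equiv.ofBijective (gmap b f hfibs) (gmap_bijective hfs hfibs) = e.symm := by
        apply Equiv.ext
        intro c
        exact Subtype.ext (hfib c)
      rw [hF]
      dsimp only
      rw [key, Equiv.symm_symm]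
  rw [Nat.card_congr (Equiv.ofBijective F hFbij)]
  have hbc : Fintype.card {x // x ∈ b} = k := by
    rw [Fintype.card_coe, ← hb, card_fibs hf₀s]
  rw [Nat.card_eq_fintype_card, Fintype.card_equiv (Fintype.equivFinOfCardEq hbc), hbc]

lemma numColourings_eq_image_card (G : SimpleGraph V) (k : ℕ)
    (s : Finset (V → Fin k))
    (hs : ∀ f, f ∈ s ↔ (Function.Surjective f ∧ GProper G f)) :
    numColourings G k = (s.image fibs).card := by
  classical
  have Ψmem : ∀ P : {P : Finpartition (univ : Finset V) //
      P.parts.card = k ∧ IsColouring G P}, P.1.parts ∈ s.image fibs := by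
    intro P
    have hcover : ∀ v : V, ∃ x ∈ P.1.parts, v ∈ x := fun v => P.1.exists_mem (mem_univ v)
    have hdisj : ∀ x ∈ P.1.parts, ∀ y ∈ P.1.parts, ∀ v : V, v ∈ x → v ∈ y → x = y :=
      fun x hx y hy v hvx hvy => P.1.eq_of_mem_parts hx hy hvx hvy
    have hne : ∀ x ∈ P.1.parts, x.Nonempty := fun x hx => P.1.nonempty_of_mem_parts hx
    have hstab : ∀ x ∈ P.1.parts, ∀ u ∈ x, ∀ w ∈ x, ¬ G.Adj u w := P.2.2
    have e : {x // x ∈ P.1.parts} ≃ Fin k :=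
      Fintype.equivFinOfCardEq (by rw [Fintype.card_coe, P.2.1])
    obtain ⟨f, hfs, hfp, -, hfibs⟩ :=
      exists_fun_of_parts G P.1.parts hcover hdisj hne hstab e
    exact Finset.mem_image.2 ⟨f, (hs f).2 ⟨hfs, hfp⟩, hfibs⟩
  set Ψ : {P : Finpartition (univ : Finset V) // P.parts.card = k ∧ IsColouring G P}
      → {x // x ∈ s.image fibs} := fun P => ⟨P.1.parts, Ψmem P⟩ with hΨ
  have hΨbij : Function.Bijective Ψ := by
    constructor
    · intro P Q h
      exact Subtype.ext (Finpartition.ext (congrArg Subtype.val h))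
    · rintro ⟨x, hx⟩
      obtain ⟨f, hf, hfibs⟩ := Finset.mem_image.1 hx
      rw [hs f] at hf
      obtain ⟨hfs, hfp⟩ := hf
      refine ⟨⟨fiberPartition f hfs, ?_, ?_⟩, Subtype.ext hfibs⟩
      · show (fibs f).card = k
        rw [card_fibs hfs]
      · intro p hp u hu w hw hadj
        obtain ⟨c, -, rfl⟩ := Finset.mem_image.1 hp
        rw [mem_fib] at hu hw
        exact hfp hadj (by rw [hu, hw])
  rw [numColourings, Nat.card_congr (Equiv.ofBijective Ψ hΨbij), Nat.card_eq_finsetCard]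

lemma numColourings_mul_factorial (G : SimpleGraph V) (k : ℕ) :
    numColourings G k * k.factorial = surjCount G k := by
  classical
  set s := univ.filter (fun f : V → Fin k => Function.Surjective f ∧ GProper G f) with hs
  have hsmem : ∀ f, f ∈ s ↔ (Function.Surjective f ∧ GProper G f) := by
    intro f
    rw [hs, Finset.mem_filter]
    simp
  have h1 : surjCount G k = s.card := (card_eq_natCard_subtype s _ hsmem).symm
  have h2 : s.card = ∑ b ∈ s.image fibs, (s.filter (fun f => fibs f = b)).card :=
    Finset.card_eq_sum_card_fiberwise (fun f hf => mem_image_of_mem _ hf)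
  have h3 : ∀ b ∈ s.image fibs, (s.filter (fun f => fibs f = b)).card = k.factorial := by
    intro b hb
    obtain ⟨f₀, hf₀, hf₀b⟩ := Finset.mem_image.1 hb
    rw [hsmem f₀] at hf₀
    rw [card_eq_natCard_subtype (s.filter (fun f => fibs f = b))
      (fun f => (Function.Surjective f ∧ GProper G f) ∧ fibs f = b)
      (by intro f; rw [Finset.mem_filter, hsmem f])]
    exact fiber_count G b f₀ hf₀.1 hf₀.2 hf₀b
  rw [h1, h2, Finset.sum_congr rfl h3, Finset.sum_const, smul_eq_mul,
    numColourings_eq_image_card G k s hsmem]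

end L1

theorem blasiak_recurrence_counts_colourings (m : ℕ) (hm : 1 ≤ m) (S : ℕ → ℕ → ℕ)
    (h1 : S 1 m = 1)
    (h1' : ∀ k, k ≠ m → S 1 k = 0)
    (h0 : ∀ n k, k < m → S n k = 0)
    (hrec : ∀ n, 1 ≤ n → ∀ k,
      S (n + 1) k = ∑ p ∈ Finset.range (m + 1),
        (k + p - m).choose p * m.descFactorial p * S n (k + p - m)) :
    ∀ n, 1 ≤ n → ∀ k, 1 ≤ k → S n k = numColourings (cliqueUnion n m) k := by
  intro n hn k _
  have hS := sum_choose_S m hm S h1 h1' h0 hrec n hn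
  have key : ∀ j, j.factorial * S n j = surjCount (cliqueUnion n m) j := by
    apply binomial_transform_inj
    intro k'
    calc ∑ j ∈ range (k'+1), k'.choose j * (j.factorial * S n j)
        = (k'.descFactorial m)^n := hS k'
      _ = ∑ j ∈ range (k'+1), k'.choose j * surjCount (cliqueUnion n m) j :=
          (sum_choose_surjCount n m k').symm
  have hL1 := numColourings_mul_factorial (cliqueUnion n m) k
  apply Nat.eq_of_mul_eq_mul_left (Nat.factorial_pos k)
  rw [key k, ← hL1, mul_comm]
end
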